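/- Let w = s_1 s_2 s_3 s_5 s_4 s_2 s_1 in the Weyl group of E6. Then for every integer p, w((p−3)ω_1 + ρ − p(α_1+α_2+α_3+α_4+α_5)) = (p−5)ω_1 + ω_6 + ρ. Thus the contribution of the root α_1+α_2+α_3+α_4+α_5 to the Jantzen sum for (p−3)ω_1 is −χ((p−5)ω_1+ω_6). -/
import Mathlib


noncomputable section
open scoped BigOperators

/-- The ambient Euclidean space ℝ^8 -/
abbrev V8 := Fin 8 → ℝ

/-- Standard dot product on ℝ^8. -/
def dot (x y : V8) : ℝ := ∑ i, x i * y i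

/-- Standard basis vector e_i. -/
def e (i : Fin 8) : V8 := fun j => if j = i then 1 else 0

/-- The E6 root set: all ±e_i ± e_j for 4 ≤ i < j ≤ 8 (1-based; here indices 3 ≤ i < j ≤ 7)
together with all ±(1/2)[(e_1−e_2−e_3)+Σ_{i=5}^8 ±e_i] with an even number of minus signs
among the last four coordinates. -/
def E6Root : Set V8 :=
  {v | ∃ i j : Fin 8, 3 ≤ (i : ℕ) ∧ i < j ∧
      (v = e i + e j ∨ v = e i - e j ∨ v = -e i + e j ∨ v = -e i - e j)} ∪
  {v | ∃ σ : ℝ, ∃ ε : Fin 4 → ℝ, (σ = 1 ∨ σ = -1) ∧ (∀ k, ε k = 1 ∨ ε k = -1) ∧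
      (∏ k, ε k) = 1 ∧
      v = σ • ((1/2 : ℝ) •
        (e 0 - e 1 - e 2 + ∑ k : Fin 4, ε k • e (⟨4 + (k : ℕ), by have := k.isLt; omega⟩ : Fin 8)))}

/-- The fundamental roots α_1,…,α_6 of E6 (0-indexed). -/
def sroot : Fin 6 → V8 :=
  ![e 3 - e 4, e 4 - e 5, e 5 - e 6, e 6 + e 7, e 6 - e 7,
    (1/2 : ℝ) • (e 0 - e 1 - e 2 - e 3 - e 4 - e 5 - e 6 + e 7)]

/-- The fundamental weights ω_1,…,ω_6 of E6 (0-indexed), in coordinates. -/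
def fweight : Fin 6 → V8 :=
  ![![1/3, -1/3, -1/3, 1, 0, 0, 0, 0],
    ![2/3, -2/3, -2/3, 1, 1, 0, 0, 0],
    ![1, -1, -1, 1, 1, 1, 0, 0],
    ![1/2, -1/2, -1/2, 1/2, 1/2, 1/2, 1/2, 1/2],
    ![5/6, -5/6, -5/6, 1/2, 1/2, 1/2, 1/2, -1/2],
    ![2/3, -2/3, -2/3, 0, 0, 0, 0, 0]]

/-- Half-sum of positive roots, i.e. the sum of the fundamental weights. -/
def rho : V8 := ∑ i, fweight i

/-- A weight given by its coordinates with respect to the fundamental weights. -/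
def wcoord (a : Fin 6 → ℝ) : V8 := ∑ i, a i • fweight i

/-- A vector given by its coordinates with respect to the fundamental roots. -/
def rcoord (c : Fin 6 → ℝ) : V8 := ∑ i, c i • sroot i

/-- The positive roots: elements of the root set that are nonnegative integer
combinations of the fundamental roots. -/
def PosRoot : Set V8 :=
  {β | β ∈ E6Root ∧ ∃ c : Fin 6 → ℕ, β = ∑ i, (c i : ℝ) • sroot i}

/-- The simple reflection in the simple root α_i (roots have squared norm 2). -/
def srefl (i : Fin 6) : V8 → V8 := fun v => v - (dot v (sroot i)) • sroot i

/-- Membership in the Weyl group: a composition of simple reflections. -/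
def IsWeyl (w : V8 → V8) : Prop :=
  w ∈ Submonoid.closure (M := Function.End V8) (Set.range (fun i => (srefl i : Function.End V8)))

/-- Length of a Weyl group element (as a map), as the number of positive roots
sent to negative roots. -/
def wlen (w : V8 → V8) : ℕ := Set.ncard {β | β ∈ PosRoot ∧ w β ∉ PosRoot}

/-- w = s_1 s_2 s_3 s_5 s_4 s_2 s_1 (0-indexed: 0 1 2 4 3 1 0). -/
def w10 : V8 → V8 :=
  srefl 0 ∘ srefl 1 ∘ srefl 2 ∘ srefl 4 ∘ srefl 3 ∘ srefl 1 ∘ srefl 0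

@[simp] lemma cons_val_five {α : Type*} {m : ℕ} (x : α) (u : Fin m.succ.succ.succ.succ.succ → α) :
    Matrix.vecCons x u 5 = Matrix.vecHead (Matrix.vecTail (Matrix.vecTail (Matrix.vecTail (Matrix.vecTail u)))) := rfl
@[simp] lemma cons_val_six {α : Type*} {m : ℕ} (x : α) (u : Fin m.succ.succ.succ.succ.succ.succ → α) :
    Matrix.vecCons x u 6 = Matrix.vecHead (Matrix.vecTail (Matrix.vecTail (Matrix.vecTail (Matrix.vecTail (Matrix.vecTail u))))) := rfl
@[simp] lemma cons_val_seven {α : Type*} {m : ℕ} (x : α) (u : Fin m.succ.succ.succ.succ.succ.succ.succ → α) :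
    Matrix.vecCons x u 7 = Matrix.vecHead (Matrix.vecTail (Matrix.vecTail (Matrix.vecTail (Matrix.vecTail (Matrix.vecTail (Matrix.vecTail u)))))) := rfl

def mk (a b c d f g h i : ℝ) : V8 := ![a,b,c,d,f,g,h,i]
@[simp] lemma mk0 (a b c d f g h i : ℝ) : mk a b c d f g h i 0 = a := rfl
@[simp] lemma mk1 (a b c d f g h i : ℝ) : mk a b c d f g h i 1 = b := rfl
@[simp] lemma mk2 (a b c d f g h i : ℝ) : mk a b c d f g h i 2 = c := rfl
@[simp] lemma mk3 (a b c d f g h i : ℝ) : mk a b c d f g h i 3 = d := rfl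
@[simp] lemma mk4 (a b c d f g h i : ℝ) : mk a b c d f g h i 4 = f := rfl
@[simp] lemma mk5 (a b c d f g h i : ℝ) : mk a b c d f g h i 5 = g := rfl
@[simp] lemma mk6 (a b c d f g h i : ℝ) : mk a b c d f g h i 6 = h := rfl
@[simp] lemma mk7 (a b c d f g h i : ℝ) : mk a b c d f g h i 7 = i := rfl

lemma sroot0 : sroot 0 = mk (0:ℝ) (0:ℝ) (0:ℝ) (1:ℝ) (-1:ℝ) (0:ℝ) (0:ℝ) (0:ℝ) := by
  funext j; fin_cases j <;> simp (config := { decide := true }) [sroot, e] <;> try norm_num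

lemma sroot1 : sroot 1 = mk (0:ℝ) (0:ℝ) (0:ℝ) (0:ℝ) (1:ℝ) (-1:ℝ) (0:ℝ) (0:ℝ) := by
  funext j; fin_cases j <;> simp (config := { decide := true }) [sroot, e] <;> try norm_num

lemma sroot2 : sroot 2 = mk (0:ℝ) (0:ℝ) (0:ℝ) (0:ℝ) (0:ℝ) (1:ℝ) (-1:ℝ) (0:ℝ) := by
  funext j; fin_cases j <;> simp (config := { decide := true }) [sroot, e] <;> try norm_num

lemma sroot3 : sroot 3 = mk (0:ℝ) (0:ℝ) (0:ℝ) (0:ℝ) (0:ℝ) (0:ℝ) (1:ℝ) (1:ℝ) := by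
  funext j; fin_cases j <;> simp (config := { decide := true }) [sroot, e] <;> try norm_num

lemma sroot4 : sroot 4 = mk (0:ℝ) (0:ℝ) (0:ℝ) (0:ℝ) (0:ℝ) (0:ℝ) (1:ℝ) (-1:ℝ) := by
  funext j; fin_cases j <;> simp (config := { decide := true }) [sroot, e] <;> try norm_num

lemma sroot5 : sroot 5 = mk (1/2:ℝ) (-1/2:ℝ) (-1/2:ℝ) (-1/2:ℝ) (-1/2:ℝ) (-1/2:ℝ) (-1/2:ℝ) (1/2:ℝ) := by
  funext j; fin_cases j <;> simp (config := { decide := true }) [sroot, e] <;> try norm_num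

lemma fweightmk0 : fweight 0 = mk (1/3:ℝ) (-1/3:ℝ) (-1/3:ℝ) (1:ℝ) (0:ℝ) (0:ℝ) (0:ℝ) (0:ℝ) := by
  funext j; fin_cases j <;> simp [fweight] <;> try norm_num

lemma fweightmk1 : fweight 1 = mk (2/3:ℝ) (-2/3:ℝ) (-2/3:ℝ) (1:ℝ) (1:ℝ) (0:ℝ) (0:ℝ) (0:ℝ) := by
  funext j; fin_cases j <;> simp [fweight] <;> try norm_num

lemma fweightmk2 : fweight 2 = mk (1:ℝ) (-1:ℝ) (-1:ℝ) (1:ℝ) (1:ℝ) (1:ℝ) (0:ℝ) (0:ℝ) := by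
  funext j; fin_cases j <;> simp [fweight] <;> try norm_num

lemma fweightmk3 : fweight 3 = mk (1/2:ℝ) (-1/2:ℝ) (-1/2:ℝ) (1/2:ℝ) (1/2:ℝ) (1/2:ℝ) (1/2:ℝ) (1/2:ℝ) := by
  funext j; fin_cases j <;> simp [fweight] <;> try norm_num

lemma fweightmk4 : fweight 4 = mk (5/6:ℝ) (-5/6:ℝ) (-5/6:ℝ) (1/2:ℝ) (1/2:ℝ) (1/2:ℝ) (1/2:ℝ) (-1/2:ℝ) := by
  funext j; fin_cases j <;> simp [fweight] <;> try norm_num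

lemma fweightmk5 : fweight 5 = mk (2/3:ℝ) (-2/3:ℝ) (-2/3:ℝ) (0:ℝ) (0:ℝ) (0:ℝ) (0:ℝ) (0:ℝ) := by
  funext j; fin_cases j <;> simp [fweight] <;> try norm_num

lemma rhomk : rho = mk (4:ℝ) (-4:ℝ) (-4:ℝ) (4:ℝ) (3:ℝ) (2:ℝ) (1:ℝ) (0:ℝ) := by
  funext j
  rw [rho, Fin.sum_univ_six, fweightmk0, fweightmk1, fweightmk2, fweightmk3,
    fweightmk4, fweightmk5]
  fin_cases j <;> simp <;> try norm_num

lemma rcoordmk : rcoord ![1,1,1,1,1,0] = mk (0:ℝ) (0:ℝ) (0:ℝ) (1:ℝ) (0:ℝ) (0:ℝ) (1:ℝ) (0:ℝ) := by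
  funext j
  rw [rcoord, Fin.sum_univ_six]
  simp only [Matrix.cons_val_zero, Matrix.cons_val_one, Matrix.head_cons, Matrix.cons_val_two,
    Matrix.cons_val_three, Matrix.cons_val_four, Matrix.tail_cons, sroot0, sroot1, sroot2,
    sroot3, sroot4, sroot5]
  fin_cases j <;> simp <;> try norm_num

lemma step0 (q : ℝ) : srefl 0 (mk (3 + q/3:ℝ) (-3 - q/3:ℝ) (-3 - q/3:ℝ) (1:ℝ) (3:ℝ) (2:ℝ) (1 - q:ℝ) (0:ℝ)) = mk (3 + q/3:ℝ) (-3 - q/3:ℝ) (-3 - q/3:ℝ) (3:ℝ) (1:ℝ) (2:ℝ) (1 - q:ℝ) (0:ℝ) := by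
  have hd : dot (mk (3 + q/3:ℝ) (-3 - q/3:ℝ) (-3 - q/3:ℝ) (1:ℝ) (3:ℝ) (2:ℝ) (1 - q:ℝ) (0:ℝ)) (sroot 0) = -2 := by
    simp [dot, Fin.sum_univ_eight, sroot0]; try ring
  funext j
  rw [srefl, hd, sroot0]
  fin_cases j <;> simp <;> try ring

lemma step1 (q : ℝ) : srefl 1 (mk (3 + q/3:ℝ) (-3 - q/3:ℝ) (-3 - q/3:ℝ) (3:ℝ) (1:ℝ) (2:ℝ) (1 - q:ℝ) (0:ℝ)) = mk (3 + q/3:ℝ) (-3 - q/3:ℝ) (-3 - q/3:ℝ) (3:ℝ) (2:ℝ) (1:ℝ) (1 - q:ℝ) (0:ℝ) := by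
  have hd : dot (mk (3 + q/3:ℝ) (-3 - q/3:ℝ) (-3 - q/3:ℝ) (3:ℝ) (1:ℝ) (2:ℝ) (1 - q:ℝ) (0:ℝ)) (sroot 1) = -1 := by
    simp [dot, Fin.sum_univ_eight, sroot1]; try ring
  funext j
  rw [srefl, hd, sroot1]
  fin_cases j <;> simp <;> try ring

lemma step2 (q : ℝ) : srefl 3 (mk (3 + q/3:ℝ) (-3 - q/3:ℝ) (-3 - q/3:ℝ) (3:ℝ) (2:ℝ) (1:ℝ) (1 - q:ℝ) (0:ℝ)) = mk (3 + q/3:ℝ) (-3 - q/3:ℝ) (-3 - q/3:ℝ) (3:ℝ) (2:ℝ) (1:ℝ) (0:ℝ) (-1 + q:ℝ) := by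
  have hd : dot (mk (3 + q/3:ℝ) (-3 - q/3:ℝ) (-3 - q/3:ℝ) (3:ℝ) (2:ℝ) (1:ℝ) (1 - q:ℝ) (0:ℝ)) (sroot 3) = 1 - q := by
    simp [dot, Fin.sum_univ_eight, sroot3]; try ring
  funext j
  rw [srefl, hd, sroot3]
  fin_cases j <;> simp <;> try ring

lemma step3 (q : ℝ) : srefl 4 (mk (3 + q/3:ℝ) (-3 - q/3:ℝ) (-3 - q/3:ℝ) (3:ℝ) (2:ℝ) (1:ℝ) (0:ℝ) (-1 + q:ℝ)) = mk (3 + q/3:ℝ) (-3 - q/3:ℝ) (-3 - q/3:ℝ) (3:ℝ) (2:ℝ) (1:ℝ) (-1 + q:ℝ) (0:ℝ) := by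
  have hd : dot (mk (3 + q/3:ℝ) (-3 - q/3:ℝ) (-3 - q/3:ℝ) (3:ℝ) (2:ℝ) (1:ℝ) (0:ℝ) (-1 + q:ℝ)) (sroot 4) = 1 - q := by
    simp [dot, Fin.sum_univ_eight, sroot4]; try ring
  funext j
  rw [srefl, hd, sroot4]
  fin_cases j <;> simp <;> try ring

lemma step4 (q : ℝ) : srefl 2 (mk (3 + q/3:ℝ) (-3 - q/3:ℝ) (-3 - q/3:ℝ) (3:ℝ) (2:ℝ) (1:ℝ) (-1 + q:ℝ) (0:ℝ)) = mk (3 + q/3:ℝ) (-3 - q/3:ℝ) (-3 - q/3:ℝ) (3:ℝ) (2:ℝ) (-1 + q:ℝ) (1:ℝ) (0:ℝ) := by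
  have hd : dot (mk (3 + q/3:ℝ) (-3 - q/3:ℝ) (-3 - q/3:ℝ) (3:ℝ) (2:ℝ) (1:ℝ) (-1 + q:ℝ) (0:ℝ)) (sroot 2) = 2 - q := by
    simp [dot, Fin.sum_univ_eight, sroot2]; try ring
  funext j
  rw [srefl, hd, sroot2]
  fin_cases j <;> simp <;> try ring

lemma step5 (q : ℝ) : srefl 1 (mk (3 + q/3:ℝ) (-3 - q/3:ℝ) (-3 - q/3:ℝ) (3:ℝ) (2:ℝ) (-1 + q:ℝ) (1:ℝ) (0:ℝ)) = mk (3 + q/3:ℝ) (-3 - q/3:ℝ) (-3 - q/3:ℝ) (3:ℝ) (-1 + q:ℝ) (2:ℝ) (1:ℝ) (0:ℝ) := by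
  have hd : dot (mk (3 + q/3:ℝ) (-3 - q/3:ℝ) (-3 - q/3:ℝ) (3:ℝ) (2:ℝ) (-1 + q:ℝ) (1:ℝ) (0:ℝ)) (sroot 1) = 3 - q := by
    simp [dot, Fin.sum_univ_eight, sroot1]; try ring
  funext j
  rw [srefl, hd, sroot1]
  fin_cases j <;> simp <;> try ring

lemma step6 (q : ℝ) : srefl 0 (mk (3 + q/3:ℝ) (-3 - q/3:ℝ) (-3 - q/3:ℝ) (3:ℝ) (-1 + q:ℝ) (2:ℝ) (1:ℝ) (0:ℝ)) = mk (3 + q/3:ℝ) (-3 - q/3:ℝ) (-3 - q/3:ℝ) (-1 + q:ℝ) (3:ℝ) (2:ℝ) (1:ℝ) (0:ℝ) := by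
  have hd : dot (mk (3 + q/3:ℝ) (-3 - q/3:ℝ) (-3 - q/3:ℝ) (3:ℝ) (-1 + q:ℝ) (2:ℝ) (1:ℝ) (0:ℝ)) (sroot 0) = 4 - q := by
    simp [dot, Fin.sum_univ_eight, sroot0]; try ring
  funext j
  rw [srefl, hd, sroot0]
  fin_cases j <;> simp <;> try ring


lemma input_eq (q : ℝ) :
    (q - 3) • fweight 0 + rho - q • rcoord ![1,1,1,1,1,0] =
      mk (3 + q/3:ℝ) (-3 - q/3:ℝ) (-3 - q/3:ℝ) (1:ℝ) (3:ℝ) (2:ℝ) (1 - q:ℝ) (0:ℝ) := by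
  funext j
  rw [fweightmk0, rhomk, rcoordmk]
  fin_cases j <;> simp <;> try ring

lemma target_eq (q : ℝ) :
    (q - 5) • fweight 0 + fweight 5 + rho =
      mk (3 + q/3:ℝ) (-3 - q/3:ℝ) (-3 - q/3:ℝ) (-1 + q:ℝ) (3:ℝ) (2:ℝ) (1:ℝ) (0:ℝ) := by
  funext j
  rw [fweightmk0, fweightmk5, rhomk]
  fin_cases j <;> simp <;> try ring

theorem e6_contribution_pminus5_omega6 :
    ∀ p : ℤ,
      w10 (((p : ℝ) - 3) • fweight 0 + rho - (p : ℝ) • rcoord ![1,1,1,1,1,0]) =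
        ((p : ℝ) - 5) • fweight 0 + fweight 5 + rho := by
  intro p
  rw [input_eq, target_eq]
  rw [w10]
  simp only [Function.comp_apply]
  rw [step0, step1, step2, step3, step4, step5, step6]
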